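/- Let n ≥ d ≥ 1, m = C(n,d), λ ∈ (0,1). With Ψ and G as in the quadratic Lyapunov analysis, if Σ_{j∈[n]} q_j > n(1+λ)/(2(1−λ)) then GΨ(x) < 0; moreover sup_x GΨ(x) ≤ nd(λ+1) < ∞. -/

import Mathlib

open scoped BigOperators

/-- Classes are the `d`-element subsets of `[n]`. -/
def classes (n d : ℕ) : Finset (Finset (Fin n)) :=
  Finset.univ.filter (fun i : Finset (Fin n) => i.card = d)

/-- `q_j(x) = Σ_{i : j ∈ i} x_i`, the queue length at server `j` in state `x`. -/
def queueLen (n d : ℕ) (x : Finset (Fin n) → ℕ) (j : Fin n) : ℕ :=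
  ∑ i ∈ (classes n d).filter (fun i => j ∈ i), x i

/-- The quadratic Lyapunov function `Ψ(x) = Σ_j q_j²`. -/
noncomputable def lyap (n d : ℕ) (x : Finset (Fin n) → ℕ) : ℝ :=
  ∑ j : Fin n, ((queueLen n d x j : ℝ)) ^ 2

/-- The generator applied to `Ψ`: arrivals at rate `nλ/m` per class,
departures at rate `x_i Σ_{j∈i} 1/q_j`. -/
noncomputable def genLyap (n d : ℕ) (lam : ℝ) (x : Finset (Fin n) → ℕ) : ℝ :=
  ∑ i ∈ classes n d,
    (((n : ℝ) * lam / (n.choose d : ℝ)) *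
        (lyap n d (Function.update x i (x i + 1)) - lyap n d x) +
      (x i : ℝ) * (∑ j ∈ i, 1 / (queueLen n d x j : ℝ)) *
        (lyap n d (Function.update x i (x i - 1)) - lyap n d x))

lemma mem_classes_iff {n d : ℕ} {i : Finset (Fin n)} : i ∈ classes n d ↔ i.card = d := by
  simp [classes]

lemma card_filter_mem {n d : ℕ} (hd : 1 ≤ d) (j : Fin n) :
    ((classes n d).filter (fun i => j ∈ i)).card = (n - 1).choose (d - 1) := by
  have h : ((classes n d).filter (fun i => j ∈ i)).card
      = (Finset.powersetCard (d - 1) (Finset.univ.erase j)).card := by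
    apply Finset.card_bij (fun i _ => i.erase j)
    · intro i hi
      simp only [Finset.mem_filter, mem_classes_iff] at hi
      rw [Finset.mem_powersetCard]
      refine ⟨?_, ?_⟩
      · intro a ha
        rw [Finset.mem_erase] at ha ⊢
        exact ⟨ha.1, Finset.mem_univ _⟩
      · rw [Finset.card_erase_of_mem hi.2, hi.1]
    · intro i hi i' hi' h
      simp only [Finset.mem_filter] at hi hi'
      have := congrArg (insert j) h
      rwa [Finset.insert_erase hi.2, Finset.insert_erase hi'.2] at this
    · intro s hs
      rw [Finset.mem_powersetCard] at hs
      have hj : j ∉ s := fun h => (Finset.mem_erase.mp (hs.1 h)).1 rfl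
      refine ⟨insert j s, ?_, Finset.erase_insert hj⟩
      simp only [Finset.mem_filter, mem_classes_iff]
      constructor
      · rw [Finset.card_insert_of_notMem hj, hs.2]
        have hc := Finset.card_erase_of_mem (Finset.mem_univ j)
        omega
      · exact Finset.mem_insert_self _ _
  rw [h, Finset.card_powersetCard, Finset.card_erase_of_mem (Finset.mem_univ j),
    Finset.card_univ, Fintype.card_fin]

lemma swap_sum {n d : ℕ} (F : Finset (Fin n) → Fin n → ℝ) :
    ∑ i ∈ classes n d, ∑ j ∈ i, F i j
      = ∑ j : Fin n, ∑ i ∈ (classes n d).filter (fun i => j ∈ i), F i j := by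
  have h1 : ∀ i : Finset (Fin n), ∑ j ∈ i, F i j = ∑ j : Fin n, if j ∈ i then F i j else 0 := by
    intro i
    rw [Finset.sum_ite_mem, Finset.univ_inter]
  simp_rw [h1, Finset.sum_filter]
  exact Finset.sum_comm

lemma queueLen_update_of_not_mem {n d : ℕ} (x : Finset (Fin n) → ℕ) {i : Finset (Fin n)}
    {j : Fin n} (hj : j ∉ i) (v : ℕ) :
    queueLen n d (Function.update x i v) j = queueLen n d x j := by
  unfold queueLen
  refine Finset.sum_congr rfl fun i' hi' => ?_
  have hne : i' ≠ i := by rintro rfl; exact hj (Finset.mem_filter.mp hi').2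
  simp [Function.update_of_ne hne]

lemma queueLen_update_of_mem {n d : ℕ} (x : Finset (Fin n) → ℕ) {i : Finset (Fin n)}
    {j : Fin n} (hi : i ∈ classes n d) (hj : j ∈ i) (v : ℕ) :
    queueLen n d (Function.update x i v) j + x i = queueLen n d x j + v := by
  unfold queueLen
  have hmem : i ∈ (classes n d).filter (fun i => j ∈ i) := Finset.mem_filter.mpr ⟨hi, hj⟩
  rw [← Finset.add_sum_erase _ _ hmem, ← Finset.add_sum_erase _ _ hmem]
  have h : ∑ i' ∈ ((classes n d).filter (fun i => j ∈ i)).erase i,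
      Function.update x i v i' = ∑ i' ∈ ((classes n d).filter (fun i => j ∈ i)).erase i, x i' :=
    Finset.sum_congr rfl fun i' hi' => Function.update_of_ne (Finset.ne_of_mem_erase hi') _ _
  rw [h, Function.update_self]
  ring

lemma le_queueLen {n d : ℕ} (x : Finset (Fin n) → ℕ) {i : Finset (Fin n)}
    {j : Fin n} (hi : i ∈ classes n d) (hj : j ∈ i) : x i ≤ queueLen n d x j :=
  Finset.single_le_sum (fun _ _ => Nat.zero_le _) (Finset.mem_filter.mpr ⟨hi, hj⟩)

lemma lyap_update_add {n d : ℕ} (x : Finset (Fin n) → ℕ) {i : Finset (Fin n)}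
    (hi : i ∈ classes n d) :
    lyap n d (Function.update x i (x i + 1)) - lyap n d x
      = ∑ j ∈ i, (2 * (queueLen n d x j : ℝ) + 1) := by
  unfold lyap
  rw [← Finset.sum_sub_distrib]
  rw [← Finset.sum_subset (Finset.subset_univ i) (fun j _ hj => by
    rw [queueLen_update_of_not_mem x hj]; ring)]
  refine Finset.sum_congr rfl fun j hj => ?_
  have h := queueLen_update_of_mem x hi hj (x i + 1)
  have h2 : queueLen n d (Function.update x i (x i + 1)) j = queueLen n d x j + 1 := by omega
  rw [h2]; push_cast; ring

lemma lyap_update_sub {n d : ℕ} (x : Finset (Fin n) → ℕ) {i : Finset (Fin n)}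
    (hi : i ∈ classes n d) (hx : 1 ≤ x i) :
    lyap n d (Function.update x i (x i - 1)) - lyap n d x
      = ∑ j ∈ i, (1 - 2 * (queueLen n d x j : ℝ)) := by
  unfold lyap
  rw [← Finset.sum_sub_distrib]
  rw [← Finset.sum_subset (Finset.subset_univ i) (fun j _ hj => by
    rw [queueLen_update_of_not_mem x hj]; ring)]
  refine Finset.sum_congr rfl fun j hj => ?_
  have h := queueLen_update_of_mem x hi hj (x i - 1)
  have hle := le_queueLen x hi hj
  have h2 : queueLen n d (Function.update x i (x i - 1)) j + 1 = queueLen n d x j := by omega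
  have h3 : ((queueLen n d (Function.update x i (x i - 1)) j : ℝ))
      = (queueLen n d x j : ℝ) - 1 := by
    rw [← h2]; push_cast; ring
  rw [h3]; ring

lemma cs_aux {n : ℕ} {i : Finset (Fin n)} (q : Fin n → ℝ) (hq : ∀ j ∈ i, 1 ≤ q j) :
    (i.card : ℝ) ^ 2 ≤ (∑ j ∈ i, 1 / q j) * (∑ j ∈ i, q j) := by
  have h := Finset.sum_mul_sq_le_sq_mul_sq i (fun j => Real.sqrt (1 / q j))
    (fun j => Real.sqrt (q j))
  have h1 : ∀ j ∈ i, Real.sqrt (1 / q j) * Real.sqrt (q j) = 1 := by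
    intro j hj
    have hq0 : (0:ℝ) < q j := lt_of_lt_of_le one_pos (hq j hj)
    rw [← Real.sqrt_mul (by positivity), one_div_mul_cancel hq0.ne', Real.sqrt_one]
  have h2 : ∀ j ∈ i, Real.sqrt (1 / q j) ^ 2 = 1 / q j := by
    intro j hj
    have hq0 : (0:ℝ) < q j := lt_of_lt_of_le one_pos (hq j hj)
    exact Real.sq_sqrt (by positivity)
  have h3 : ∀ j ∈ i, Real.sqrt (q j) ^ 2 = q j := fun j hj =>
    Real.sq_sqrt (le_trans zero_le_one (hq j hj))
  rw [Finset.sum_congr rfl h1, Finset.sum_congr rfl h2, Finset.sum_congr rfl h3,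
    Finset.sum_const, nsmul_eq_mul, mul_one] at h
  exact h

lemma choose_id {n d : ℕ} (hd : 1 ≤ d) (hdn : d ≤ n) :
    n * (n - 1).choose (d - 1) = d * n.choose d := by
  obtain ⟨n', rfl⟩ : ∃ n', n = n' + 1 := ⟨n - 1, by omega⟩
  obtain ⟨d', rfl⟩ : ∃ d', d = d' + 1 := ⟨d - 1, by omega⟩
  simpa [Nat.mul_comm] using Nat.add_one_mul_choose_eq n' d'

lemma dep_bound {n d : ℕ} (x : Finset (Fin n) → ℕ) {i : Finset (Fin n)}
    (hi : i ∈ classes n d) :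
    (x i : ℝ) * (∑ j ∈ i, 1 / (queueLen n d x j : ℝ)) *
        (lyap n d (Function.update x i (x i - 1)) - lyap n d x)
      ≤ (i.card : ℝ) * (∑ j ∈ i, (x i : ℝ) / (queueLen n d x j : ℝ))
        - 2 * (i.card : ℝ) ^ 2 * (x i : ℝ) := by
  rcases Nat.eq_zero_or_pos (x i) with h0 | h1
  · simp [h0]
  · rw [lyap_update_sub x hi h1]
    have hq : ∀ j ∈ i, (1:ℝ) ≤ (queueLen n d x j : ℝ) := fun j hj => by
      exact_mod_cast le_trans h1 (le_queueLen x hi hj)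
    have hCS := cs_aux (fun j => (queueLen n d x j : ℝ)) hq
    have hΔ : ∑ j ∈ i, (1 - 2 * (queueLen n d x j : ℝ))
        = (i.card : ℝ) - 2 * ∑ j ∈ i, (queueLen n d x j : ℝ) := by
      rw [Finset.sum_sub_distrib, Finset.sum_const, ← Finset.mul_sum]; simp
    have hxS : (∑ j ∈ i, (x i : ℝ) / (queueLen n d x j : ℝ))
        = (x i : ℝ) * ∑ j ∈ i, 1 / (queueLen n d x j : ℝ) := by
      rw [Finset.mul_sum]; simp_rw [mul_one_div]
    have hx0 : (0:ℝ) ≤ (x i : ℝ) := Nat.cast_nonneg _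
    rw [hΔ, hxS]
    nlinarith [mul_le_mul_of_nonneg_left hCS hx0]

/-- Negative drift outside a compact set, and a uniform upper bound on the drift. -/
theorem genLyap_negative_drift (n d : ℕ) (hd : 1 ≤ d) (hdn : d ≤ n) (lam : ℝ)
    (hl : lam ∈ Set.Ioo (0 : ℝ) 1) :
    (∀ x : Finset (Fin n) → ℕ,
      (n : ℝ) * (1 + lam) / (2 * (1 - lam)) < (∑ j : Fin n, (queueLen n d x j : ℝ)) →
        genLyap n d lam x < 0) ∧
    (∀ x : Finset (Fin n) → ℕ, genLyap n d lam x ≤ (n : ℝ) * (d : ℝ) * (lam + 1)) := by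
  obtain ⟨hl0, hl1⟩ := hl
  have hm0 : (0:ℝ) < (n.choose d : ℝ) := by exact_mod_cast Nat.choose_pos hdn
  have hnc : (n:ℝ) * ((n - 1).choose (d - 1) : ℝ) = (d:ℝ) * (n.choose d : ℝ) := by
    exact_mod_cast choose_id hd hdn
  have hd1 : (1:ℝ) ≤ (d:ℝ) := by exact_mod_cast hd
  have key : ∀ x : Finset (Fin n) → ℕ,
      genLyap n d lam x ≤ 2 * (d:ℝ) * (lam - 1) * (∑ j : Fin n, (queueLen n d x j : ℝ))
        + (n:ℝ) * (d:ℝ) * (lam + 1) := by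
    intro x
    set Q := ∑ j : Fin n, (queueLen n d x j : ℝ) with hQdef
    have hcard : ∀ i ∈ classes n d, (i.card : ℝ) = (d:ℝ) := fun i hi => by
      exact_mod_cast mem_classes_iff.mp hi
    have hA : ∑ i ∈ classes n d, ((n:ℝ) * lam / (n.choose d : ℝ)) *
        (lyap n d (Function.update x i (x i + 1)) - lyap n d x)
        = 2 * lam * (d:ℝ) * Q + (n:ℝ) * lam * (d:ℝ) := by
      have h1 : ∀ i ∈ classes n d, ((n:ℝ) * lam / (n.choose d : ℝ)) *
          (lyap n d (Function.update x i (x i + 1)) - lyap n d x)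
          = ((n:ℝ) * lam / (n.choose d : ℝ)) * ∑ j ∈ i, (2 * (queueLen n d x j : ℝ) + 1) :=
        fun i hi => by rw [lyap_update_add x hi]
      rw [Finset.sum_congr rfl h1, ← Finset.mul_sum,
        swap_sum (fun _ j => 2 * (queueLen n d x j : ℝ) + 1)]
      have h2 : ∀ j : Fin n, ∑ _i ∈ (classes n d).filter (fun i => j ∈ i),
          (2 * (queueLen n d x j : ℝ) + 1)
          = ((n - 1).choose (d - 1) : ℝ) * (2 * (queueLen n d x j : ℝ) + 1) := fun j => by
        rw [Finset.sum_const, card_filter_mem hd j, nsmul_eq_mul]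
      rw [Finset.sum_congr rfl fun j _ => h2 j, ← Finset.mul_sum, Finset.sum_add_distrib,
        ← Finset.mul_sum, Finset.sum_const, Finset.card_univ, Fintype.card_fin,
        nsmul_eq_mul, mul_one]
      field_simp
      linear_combination (2 * Q + (n:ℝ)) * hnc
    have hswap : ∑ i ∈ classes n d, ∑ j ∈ i, (x i : ℝ) / (queueLen n d x j : ℝ)
        = ∑ j : Fin n, (queueLen n d x j : ℝ) / (queueLen n d x j : ℝ) := by
      rw [swap_sum (fun i j => (x i : ℝ) / (queueLen n d x j : ℝ))]
      refine Finset.sum_congr rfl fun j _ => ?_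
      rw [← Finset.sum_div]
      congr 1
      exact (Nat.cast_sum _ _).symm
    have hfrac : ∑ j : Fin n, (queueLen n d x j : ℝ) / (queueLen n d x j : ℝ) ≤ (n:ℝ) := by
      calc ∑ j : Fin n, (queueLen n d x j : ℝ) / (queueLen n d x j : ℝ)
          ≤ ∑ _j : Fin n, (1:ℝ) := by
            refine Finset.sum_le_sum fun j _ => ?_
            rcases eq_or_ne ((queueLen n d x j : ℝ)) 0 with h | h
            · simp [h]
            · simp [div_self h]
        _ = (n:ℝ) := by simp
    have hxsum : (d:ℝ) * ∑ i ∈ classes n d, (x i : ℝ) = Q := by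
      have hs := swap_sum (fun i _ => (x i : ℝ)) (n := n) (d := d)
      have hl2 : ∑ i ∈ classes n d, ∑ _j ∈ i, (x i : ℝ)
          = (d:ℝ) * ∑ i ∈ classes n d, (x i : ℝ) := by
        rw [Finset.mul_sum]
        refine Finset.sum_congr rfl fun i hi => ?_
        rw [Finset.sum_const, nsmul_eq_mul, hcard i hi]
      have hr2 : ∑ j : Fin n, ∑ i ∈ (classes n d).filter (fun i => j ∈ i), (x i : ℝ) = Q := by
        refine Finset.sum_congr rfl fun j _ => (Nat.cast_sum _ _).symm
      rw [hl2, hr2] at hs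
      exact hs
    have hD : ∑ i ∈ classes n d, (x i : ℝ) * (∑ j ∈ i, 1 / (queueLen n d x j : ℝ)) *
        (lyap n d (Function.update x i (x i - 1)) - lyap n d x)
        ≤ -(2 * (d:ℝ) * Q) + (d:ℝ) * (n:ℝ) := by
      calc ∑ i ∈ classes n d, (x i : ℝ) * (∑ j ∈ i, 1 / (queueLen n d x j : ℝ)) *
            (lyap n d (Function.update x i (x i - 1)) - lyap n d x)
          ≤ ∑ i ∈ classes n d, ((i.card : ℝ) * (∑ j ∈ i, (x i : ℝ) / (queueLen n d x j : ℝ))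
              - 2 * (i.card : ℝ) ^ 2 * (x i : ℝ)) :=
            Finset.sum_le_sum fun i hi => dep_bound x hi
        _ = (d:ℝ) * (∑ i ∈ classes n d, ∑ j ∈ i, (x i : ℝ) / (queueLen n d x j : ℝ))
              - 2 * (d:ℝ) ^ 2 * ∑ i ∈ classes n d, (x i : ℝ) := by
            rw [Finset.sum_sub_distrib, Finset.mul_sum, Finset.mul_sum]
            congr 1
            · exact Finset.sum_congr rfl fun i hi => by rw [hcard i hi]
            · exact Finset.sum_congr rfl fun i hi => by rw [hcard i hi]
        _ ≤ (d:ℝ) * (n:ℝ) - 2 * (d:ℝ) ^ 2 * ∑ i ∈ classes n d, (x i : ℝ) := by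
            have := hswap ▸ hfrac
            have hd0 : (0:ℝ) ≤ (d:ℝ) := Nat.cast_nonneg _
            nlinarith [mul_le_mul_of_nonneg_left (hswap ▸ hfrac) hd0]
        _ = -(2 * (d:ℝ) * Q) + (d:ℝ) * (n:ℝ) := by
            have : 2 * (d:ℝ) ^ 2 * ∑ i ∈ classes n d, (x i : ℝ)
                = 2 * (d:ℝ) * ((d:ℝ) * ∑ i ∈ classes n d, (x i : ℝ)) := by ring
            rw [this, hxsum]; ring
    unfold genLyap
    rw [Finset.sum_add_distrib, hA]
    linarith [hD]
  refine ⟨fun x hx => ?_, fun x => ?_⟩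
  · have hk := key x
    set Q := ∑ j : Fin n, (queueLen n d x j : ℝ) with hQdef
    have h2 : (0:ℝ) < 2 * (1 - lam) := by linarith
    rw [div_lt_iff₀ h2] at hx
    nlinarith [mul_lt_mul_of_pos_left hx (lt_of_lt_of_le one_pos hd1)]
  · have hk := key x
    have hQ0 : (0:ℝ) ≤ ∑ j : Fin n, (queueLen n d x j : ℝ) :=
      Finset.sum_nonneg fun j _ => Nat.cast_nonneg _
    nlinarith [mul_nonneg (Nat.cast_nonneg (α := ℝ) d) hQ0]
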